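/- The constant function 1 is a positive bounded supersolution of (L, B) (indeed L1 = 0 on (1,∞) and B1 = 0), so the generalized principal eigenvalue satisfies λ₁ ≥ 0. Nevertheless, for every ε ∈ (0,1) the function v(x) = 1 - ε - 1/x is a bounded C² subsolution (Lv = 0 ≤ 0 on (1,∞) and -v'(1) = -1 ≤ 0) with v(1) = -ε < 0 and v(x) > 0 for all sufficiently large x. Consequently the Critical Maximum Principle fails for (L, B): for every function φ : [1,∞) → ℝ with φ > 0, the subsolution v has finite supremum, is not nonpositive, and is not a constant multiple of φ. -/

import Mathlib

/-- The operator `L u = -u'' - (2/x) u'` on `(1,∞)`. -/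
noncomputable def LopEx (u : ℝ → ℝ) (x : ℝ) : ℝ :=
  -(deriv (deriv u) x) - (2 / x) * deriv u x

/-- The generalized principal eigenvalue of `L u = -u'' - (2/x) u'` on `(1,∞)` with
Neumann boundary operator `B u = -u'(1)`. -/
noncomputable def lambda1Ex : ℝ :=
  sSup {l : ℝ | ∃ φ : ℝ → ℝ, ContDiffOn ℝ 2 φ (Set.Ici 1) ∧
    (∀ x : ℝ, 1 ≤ x → 0 < φ x) ∧
    (∀ x : ℝ, 1 < x → l * φ x ≤ LopEx φ x) ∧
    0 ≤ -(derivWithin φ (Set.Ici 1) 1)}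

lemma hasDerivAt_vEx {ε x : ℝ} (hx : x ≠ 0) :
    HasDerivAt (fun y : ℝ => 1 - ε - 1 / y) ((x ^ 2)⁻¹) x :=
  by simpa [one_div, sub_neg_eq_add, Pi.sub_def] using (hasDerivAt_const x (1 - ε)).sub (hasDerivAt_inv hx)

lemma deriv_vEx {ε x : ℝ} (hx : x ≠ 0) :
    deriv (fun y : ℝ => 1 - ε - 1 / y) x = (x ^ 2)⁻¹ :=
  (hasDerivAt_vEx hx).deriv


/-- The constant `1` is a supersolution, so `λ₁ ≥ 0`; nevertheless, for every
`ε ∈ (0,1)` the function `v(x) = 1 - ε - 1/x` is a bounded subsolution with `v(1) < 0`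
and `v > 0` for large `x`, hence is neither nonpositive nor a constant multiple of any
positive function: the Critical Maximum Principle fails for `(L, B)`. -/
theorem critical_maximum_principle_fails_example :
    0 ≤ lambda1Ex ∧
      ∀ ε ∈ Set.Ioo (0 : ℝ) 1, ∀ v : ℝ → ℝ, (∀ x, v x = 1 - ε - 1 / x) →
        ContDiffOn ℝ 2 v (Set.Ici 1) ∧
        (∀ x : ℝ, 1 < x → LopEx v x ≤ 0) ∧
        -(derivWithin v (Set.Ici 1) 1) ≤ 0 ∧
        BddAbove (v '' Set.Ici 1) ∧
        v 1 < 0 ∧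
        (∃ X : ℝ, ∀ x : ℝ, X ≤ x → 0 < v x) ∧
        ¬(∀ x : ℝ, 1 ≤ x → v x ≤ 0) ∧
        ∀ φ : ℝ → ℝ, (∀ x : ℝ, 1 ≤ x → 0 < φ x) →
          ¬∃ t : ℝ, ∀ x : ℝ, 1 ≤ x → v x = t * φ x := by
  constructor
  · -- λ₁ ≥ 0 via φ = 1
    have hmem : (0 : ℝ) ∈ {l : ℝ | ∃ φ : ℝ → ℝ, ContDiffOn ℝ 2 φ (Set.Ici 1) ∧
        (∀ x : ℝ, 1 ≤ x → 0 < φ x) ∧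
        (∀ x : ℝ, 1 < x → l * φ x ≤ LopEx φ x) ∧
        0 ≤ -(derivWithin φ (Set.Ici 1) 1)} := by
      refine ⟨fun _ => 1, contDiffOn_const, fun x _ => one_pos, fun x _ => ?_, ?_⟩
      · simp [LopEx, deriv_const']
      · rw [(hasDerivWithinAt_const (1:ℝ) (Set.Ici 1) (1:ℝ)).derivWithin (uniqueDiffOn_Ici 1 1 Set.self_mem_Ici)]; norm_num
    by_cases hb : BddAbove {l : ℝ | ∃ φ : ℝ → ℝ, ContDiffOn ℝ 2 φ (Set.Ici 1) ∧
        (∀ x : ℝ, 1 ≤ x → 0 < φ x) ∧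
        (∀ x : ℝ, 1 < x → l * φ x ≤ LopEx φ x) ∧
        0 ≤ -(derivWithin φ (Set.Ici 1) 1)}
    · exact le_csSup hb hmem
    · unfold lambda1Ex
      rw [Real.sSup_of_not_bddAbove hb]
  · rintro ε ⟨hε0, hε1⟩ v hv
    have hvfun : v = fun x : ℝ => 1 - ε - 1 / x := funext hv
    subst hvfun
    have hεlt : (0:ℝ) < 1 - ε := by linarith
    -- big point X where v > 0
    set X : ℝ := max 1 (2 / (1 - ε)) with hX
    have hX1 : (1:ℝ) ≤ X := le_max_left _ _
    have hXpos : ∀ x : ℝ, X ≤ x → 0 < 1 - ε - 1 / x := by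
      intro x hx
      have hx2 : 2 / (1 - ε) ≤ x := le_trans (le_max_right _ _) hx
      have hxpos : 0 < x := lt_of_lt_of_le (by positivity) hx2
      have : 1 / x ≤ (1 - ε) / 2 := by
        rw [div_le_div_iff₀ hxpos (by norm_num)]
        calc (1:ℝ) * 2 = 2 := by ring
        _ = (2 / (1 - ε)) * (1 - ε) := by field_simp
        _ ≤ (1 - ε) * x := by nlinarith
      linarith
    refine ⟨?_, ?_, ?_, ?_, ?_, ⟨X, hXpos⟩, ?_, ?_⟩
    · exact (contDiffOn_const.sub (contDiffOn_const.div contDiffOn_id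
        (fun x hx => by have : (1:ℝ) ≤ x := hx; positivity)))
    · intro x hx
      have hx0 : x ≠ 0 := by positivity
      have hderiv2 : deriv (deriv (fun y : ℝ => 1 - ε - 1 / y)) x = -(2 * x) / (x ^ 2) ^ 2 := by
        have hev : deriv (fun y : ℝ => 1 - ε - 1 / y) =ᶠ[nhds x] fun y => (y ^ 2)⁻¹ := by
          filter_upwards [eventually_ne_nhds hx0] with y hy using deriv_vEx hy
        rw [Filter.EventuallyEq.deriv_eq hev]
        have h : HasDerivAt (fun y : ℝ => (y ^ 2)⁻¹) (-(2 * x) / (x ^ 2) ^ 2) x := by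
          have := (hasDerivAt_pow 2 x).inv (pow_ne_zero 2 hx0)
          simpa [Pi.inv_def] using this
        exact h.deriv
      rw [LopEx, hderiv2, deriv_vEx hx0]
      have : -(-(2 * x) / (x ^ 2) ^ 2) - 2 / x * (x ^ 2)⁻¹ = 0 := by
        field_simp
        ring
      rw [this]
    · have hd : HasDerivWithinAt (fun y : ℝ => 1 - ε - 1 / y) ((1:ℝ)) (Set.Ici 1) 1 := by
        simpa using (hasDerivAt_vEx (ε := ε) (x := (1:ℝ)) one_ne_zero).hasDerivWithinAt
      rw [hd.derivWithin (uniqueDiffOn_Ici 1 1 Set.self_mem_Ici)]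
      norm_num
    · refine ⟨1 - ε, ?_⟩
      rintro y ⟨x, hx, rfl⟩
      have hx1 : (1:ℝ) ≤ x := hx
      have : 0 < 1 / x := by positivity
      simp only
      linarith
    · simp; linarith
    · intro h
      have := h X hX1
      have := hXpos X le_rfl
      linarith
    · intro φ hφ
      rintro ⟨t, ht⟩
      have h1 := ht 1 le_rfl
      have h2 := ht X hX1
      have hφ1 := hφ 1 le_rfl
      have hφX := hφ X hX1
      have hv1 : (1:ℝ) - ε - 1 / 1 < 0 := by norm_num; linarith
      have hvX := hXpos X le_rfl
      have htneg : t < 0 := by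
        by_contra hc
        push_neg at hc
        nlinarith
      nlinarith
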